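/- (Theorem 1) The solution $(\beta_{0d}, \beta_d)$ of the ridge normal equations $n\beta_{0d} + \sum_j n_j \bar{x}_j^T \beta_d = 0$ and $\sum_j n_j \bar{x}_j \beta_{0d} + (\sum_j X_j^T X_j + \delta I)\beta_d = n S_{W,\delta}^{1/2} s_d$ satisfies $\beta_d = \frac{1}{1+\lambda_d} S_{W,\delta}^{-1/2} s_d$, where $(\lambda_d, s_d)$ is an eigenpair of $S_{W,\delta}^{-1/2} S_B S_{W,\delta}^{-1/2}$. That is, the ridge-regression coefficient vector is parallel to the LDA transformation vector $S_{W,\delta}^{-1/2}s_d$. -/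

import Mathlib

open Finset Matrix

section Helpers
variable {p : ℕ}

lemma vmv_mulVec (a b v : Fin p → ℝ) : (vecMulVec a b) *ᵥ v = (b ⬝ᵥ v) • a := by
  ext k
  simp [mulVec, vecMulVec_apply, dotProduct, Finset.sum_mul, Finset.mul_sum, mul_assoc,
    mul_comm, mul_left_comm]

lemma vmv_sub (a b : Fin p → ℝ) : vecMulVec (a - b) (a - b)
    = vecMulVec a a - vecMulVec a b - vecMulVec b a + vecMulVec b b := by
  ext k l
  simp [vecMulVec_apply]
  ring

lemma vmv_smul_left (r : ℝ) (a b : Fin p → ℝ) : vecMulVec (r • a) b = r • vecMulVec a b := by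
  ext k l
  simp [vecMulVec_apply, mul_assoc]

lemma vmv_smul_right (r : ℝ) (a b : Fin p → ℝ) : vecMulVec a (r • b) = r • vecMulVec a b := by
  ext k l
  simp [vecMulVec_apply]
  ring

lemma vmv_sum_left {ι : Type*} (t : Finset ι) (f : ι → Fin p → ℝ) (b : Fin p → ℝ) :
    vecMulVec (∑ i ∈ t, f i) b = ∑ i ∈ t, vecMulVec (f i) b := by
  ext k l
  simp [vecMulVec_apply, Finset.sum_mul, Finset.sum_apply, Matrix.sum_apply]

lemma vmv_sum_right {ι : Type*} (t : Finset ι) (a : Fin p → ℝ) (f : ι → Fin p → ℝ) :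
    vecMulVec a (∑ i ∈ t, f i) = ∑ i ∈ t, vecMulVec a (f i) := by
  ext k l
  simp [vecMulVec_apply, Finset.mul_sum, Finset.sum_apply, Matrix.sum_apply]

lemma sum_dot {ι : Type*} (t : Finset ι) (f : ι → Fin p → ℝ) (b : Fin p → ℝ) :
    (∑ j ∈ t, f j) ⬝ᵥ b = ∑ j ∈ t, f j ⬝ᵥ b := by
  simp only [dotProduct, Finset.sum_apply, Finset.sum_mul]
  rw [Finset.sum_comm]

lemma dot_sum {ι : Type*} (t : Finset ι) (a : Fin p → ℝ) (f : ι → Fin p → ℝ) :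
    a ⬝ᵥ (∑ j ∈ t, f j) = ∑ j ∈ t, a ⬝ᵥ f j := by
  simp only [dotProduct, Finset.sum_apply, Finset.mul_sum]
  rw [Finset.sum_comm]

lemma sum_mulVec' {ι : Type*} (t : Finset ι) (f : ι → Matrix (Fin p) (Fin p) ℝ)
    (v : Fin p → ℝ) : (∑ j ∈ t, f j) *ᵥ v = ∑ j ∈ t, f j *ᵥ v := by
  ext k
  simp only [mulVec, dotProduct, Matrix.sum_apply, Finset.sum_apply, Finset.sum_mul]
  rw [Finset.sum_comm]

end Helpers

/-- Theorem 1: the solution of the ridge normal equations satisfies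
`β_d = (1/(1+λ_d)) S_{W,δ}^{-1/2} s_d`. -/
theorem ridge_solution_parallel_to_LDA (p J n : ℕ) (hn : 0 < n)
    (x : Fin n → Fin p → ℝ) (c : Fin n → Fin J)
    (hcls : ∀ j, ∃ i, c i = j)
    (nj : Fin J → ℕ) (hnj : ∀ j, nj j = (Finset.univ.filter (fun i => c i = j)).card)
    (xbarj : Fin J → Fin p → ℝ)
    (hxbarj : ∀ j, xbarj j = (1 / (nj j : ℝ)) • ∑ i ∈ Finset.univ.filter (fun i => c i = j), x i)
    (xb : Fin p → ℝ) (hxb : xb = (1 / (n : ℝ)) • ∑ i, x i)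
    (SB SW : Matrix (Fin p) (Fin p) ℝ)
    (hSB : SB = (1 / (n : ℝ)) • ∑ j, (nj j : ℝ) • vecMulVec (xbarj j - xb) (xbarj j - xb))
    (hSW : SW = (1 / (n : ℝ)) • ∑ i, vecMulVec (x i - xbarj (c i)) (x i - xbarj (c i)))
    (δ : ℝ) (hδ : 0 ≤ δ) (Sδ : Matrix (Fin p) (Fin p) ℝ)
    (hSδ : Sδ = SW + (δ / (n : ℝ)) • (1 : Matrix (Fin p) (Fin p) ℝ))
    (hpos : Sδ.PosDef)
    (Wh : Matrix (Fin p) (Fin p) ℝ) (hWhSymm : Wh.IsSymm) (hWh : Wh * Wh = Sδ)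
    (s : Fin p → ℝ) (lam : ℝ) (hs : s ⬝ᵥ s = 1)
    (heig : (Wh⁻¹ * SB * Wh⁻¹).mulVec s = lam • s)
    (β0 : ℝ) (β : Fin p → ℝ)
    (hNE1 : (n : ℝ) * β0 + ∑ j, (nj j : ℝ) * (xbarj j ⬝ᵥ β) = 0)
    (hNE2 : β0 • (∑ j, (nj j : ℝ) • xbarj j)
        + ((∑ i, vecMulVec (x i) (x i)) + δ • (1 : Matrix (Fin p) (Fin p) ℝ)).mulVec β
        = (n : ℝ) • Wh.mulVec s) :
    β = (1 / (1 + lam)) • (Wh⁻¹).mulVec s := by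
  have hn0 : (n : ℝ) ≠ 0 := Nat.cast_ne_zero.mpr hn.ne'
  -- invertibility of Wh
  have hdet : IsUnit Wh.det := by
    have h1 : Wh.det * Wh.det = Sδ.det := by rw [← det_mul, hWh]
    have h2 : 0 < Sδ.det := hpos.det_pos
    have : Wh.det ≠ 0 := fun h => h2.ne (by rw [← h1, h, mul_zero])
    exact isUnit_iff_ne_zero.mpr this
  have hWW : Wh * Wh⁻¹ = 1 := mul_nonsing_inv _ hdet
  -- fiberwise facts
  have hnjpos : ∀ j, (0:ℝ) < nj j := by
    intro j
    have : 0 < nj j := by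
      rw [hnj]
      obtain ⟨i, hi⟩ := hcls j
      exact Finset.card_pos.mpr ⟨i, Finset.mem_filter.mpr ⟨Finset.mem_univ _, hi⟩⟩
    exact_mod_cast this
  have hnjx : ∀ j, (nj j : ℝ) • xbarj j = ∑ i ∈ Finset.univ.filter (fun i => c i = j), x i := by
    intro j
    rw [hxbarj j, smul_smul, mul_one_div, div_self (hnjpos j).ne', one_smul]
  have hsumnx : ∑ j, (nj j : ℝ) • xbarj j = ∑ i, x i := by
    simp_rw [hnjx]
    exact Finset.sum_fiberwise _ _ _
  have hxbn : ∑ i, x i = (n : ℝ) • xb := by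
    rw [hxb, smul_smul, mul_one_div, div_self hn0, one_smul]
  have hsumnj : ∑ j, (nj j : ℝ) = (n : ℝ) := by
    have h : ∑ j, nj j = n := by
      simp_rw [hnj, Finset.card_eq_sum_ones]
      rw [Finset.sum_fiberwise]
      simp
    exact_mod_cast h
  -- fiberwise matrix identities
  have e1 : ∑ i, vecMulVec (x i) (xbarj (c i))
      = ∑ j, (nj j : ℝ) • vecMulVec (xbarj j) (xbarj j) := by
    rw [← Finset.sum_fiberwise univ c (fun i => vecMulVec (x i) (xbarj (c i)))]
    refine Finset.sum_congr rfl fun j _ => ?_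
    rw [Finset.sum_congr rfl (fun i hi => by rw [(Finset.mem_filter.mp hi).2]),
      ← vmv_sum_left, ← hnjx j, vmv_smul_left]
  have e2 : ∑ i, vecMulVec (xbarj (c i)) (x i)
      = ∑ j, (nj j : ℝ) • vecMulVec (xbarj j) (xbarj j) := by
    rw [← Finset.sum_fiberwise univ c (fun i => vecMulVec (xbarj (c i)) (x i))]
    refine Finset.sum_congr rfl fun j _ => ?_
    rw [Finset.sum_congr rfl (fun i hi => by rw [(Finset.mem_filter.mp hi).2]),
      ← vmv_sum_right, ← hnjx j, vmv_smul_right]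
  have e3 : ∑ i, vecMulVec (xbarj (c i)) (xbarj (c i))
      = ∑ j, (nj j : ℝ) • vecMulVec (xbarj j) (xbarj j) := by
    rw [← Finset.sum_fiberwise univ c (fun i => vecMulVec (xbarj (c i)) (xbarj (c i)))]
    refine Finset.sum_congr rfl fun j _ => ?_
    rw [Finset.sum_congr rfl (fun i hi => by rw [(Finset.mem_filter.mp hi).2]),
      Finset.sum_const, ← hnj j]
    exact (Nat.cast_smul_eq_nsmul ℝ _ _).symm
  have e4 : ∑ j, (nj j : ℝ) • vecMulVec (xbarj j) xb = (n : ℝ) • vecMulVec xb xb := by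
    simp_rw [← vmv_smul_left]
    rw [← vmv_sum_left, hsumnx, hxbn, vmv_smul_left]
  have e5 : ∑ j, (nj j : ℝ) • vecMulVec xb (xbarj j) = (n : ℝ) • vecMulVec xb xb := by
    simp_rw [← vmv_smul_right]
    rw [← vmv_sum_right, hsumnx, hxbn, vmv_smul_right]
  have e6 : ∑ j, (nj j : ℝ) • vecMulVec xb xb = (n : ℝ) • vecMulVec xb xb := by
    rw [← Finset.sum_smul, hsumnj]
  have hSW' : (n : ℝ) • SW = ∑ i, vecMulVec (x i - xbarj (c i)) (x i - xbarj (c i)) := by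
    rw [hSW, smul_smul, mul_one_div, div_self hn0, one_smul]
  have hSB' : (n : ℝ) • SB = ∑ j, (nj j : ℝ) • vecMulVec (xbarj j - xb) (xbarj j - xb) := by
    rw [hSB, smul_smul, mul_one_div, div_self hn0, one_smul]
  have hSδ' : (n : ℝ) • Sδ = (n : ℝ) • SW + δ • (1 : Matrix (Fin p) (Fin p) ℝ) := by
    rw [hSδ, smul_add, smul_smul, mul_div_cancel₀ _ hn0]
  have hkey : (∑ i, vecMulVec (x i) (x i)) + δ • (1 : Matrix (Fin p) (Fin p) ℝ)
      = (n : ℝ) • Sδ + (n : ℝ) • SB + (n : ℝ) • vecMulVec xb xb := by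
    rw [hSδ', hSW', hSB']
    simp_rw [vmv_sub, smul_add, smul_sub]
    rw [Finset.sum_add_distrib, Finset.sum_sub_distrib, Finset.sum_sub_distrib,
      Finset.sum_add_distrib, Finset.sum_sub_distrib, Finset.sum_sub_distrib,
      e1, e2, e3, e4, e5, e6]
    abel
  -- derive β0 = -(xb ⬝ᵥ β)
  have hdot : ∑ j, (nj j : ℝ) * (xbarj j ⬝ᵥ β) = (n : ℝ) * (xb ⬝ᵥ β) := by
    have h : ∑ j, (nj j : ℝ) * (xbarj j ⬝ᵥ β) = (∑ j, (nj j : ℝ) • xbarj j) ⬝ᵥ β := by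
      rw [sum_dot]
      exact Finset.sum_congr rfl fun j _ => by rw [smul_dotProduct, smul_eq_mul]
    rw [h, hsumnx, hxbn, smul_dotProduct, smul_eq_mul]
  have hβ0 : β0 = -(xb ⬝ᵥ β) := by
    have h := hNE1
    rw [hdot] at h
    have h2 : (n:ℝ) * β0 = (n:ℝ) * (-(xb ⬝ᵥ β)) := by linarith
    exact mul_left_cancel₀ hn0 h2
  -- main linear equation
  have hmain : Sδ *ᵥ β + SB *ᵥ β = Wh *ᵥ s := by
    have h2 := hNE2
    rw [hkey, add_mulVec, add_mulVec, smul_mulVec, smul_mulVec,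
      smul_mulVec, vmv_mulVec, hsumnx, hxbn, hβ0] at h2
    have h3 : (n:ℝ) • (Sδ *ᵥ β + SB *ᵥ β) = (n:ℝ) • (Wh *ᵥ s) := by
      rw [← h2]
      rw [smul_comm ((n:ℝ)) ((xb ⬝ᵥ β)), neg_smul, smul_add]
      abel
    exact smul_right_injective _ hn0 h3
  -- SB quadratic form is nonneg
  have hSBquad : ∀ v : Fin p → ℝ, 0 ≤ v ⬝ᵥ (SB *ᵥ v) := by
    intro v
    rw [hSB, smul_mulVec, dotProduct_smul]
    rw [show (∑ j, (nj j : ℝ) • vecMulVec (xbarj j - xb) (xbarj j - xb)) *ᵥ v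
      = ∑ j, (nj j : ℝ) • ((vecMulVec (xbarj j - xb) (xbarj j - xb)) *ᵥ v) from by
        rw [sum_mulVec']; exact Finset.sum_congr rfl fun j _ => smul_mulVec _ _ _]
    rw [dot_sum]
    have hterm : ∀ j, v ⬝ᵥ ((nj j : ℝ) • ((vecMulVec (xbarj j - xb) (xbarj j - xb)) *ᵥ v))
        = (nj j : ℝ) * (((xbarj j - xb) ⬝ᵥ v) * ((xbarj j - xb) ⬝ᵥ v)) := by
      intro j
      rw [dotProduct_smul, vmv_mulVec, dotProduct_smul, smul_eq_mul, smul_eq_mul,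
        dotProduct_comm]
    simp_rw [hterm]
    have h0 : 0 ≤ ∑ j, (nj j : ℝ) * (((xbarj j - xb) ⬝ᵥ v) * ((xbarj j - xb) ⬝ᵥ v)) :=
      Finset.sum_nonneg fun j _ => mul_nonneg (hnjpos j).le (mul_self_nonneg _)
    have h1 : (0:ℝ) ≤ 1 / (n:ℝ) := by positivity
    exact mul_nonneg h1 h0
  -- symmetry of Wh⁻¹ and eigen consequences
  have hWhT : Whᵀ = Wh := hWhSymm
  have hWinvT : (Wh⁻¹)ᵀ = Wh⁻¹ := by rw [Matrix.transpose_nonsing_inv, hWhT]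
  set u : Fin p → ℝ := Wh⁻¹ *ᵥ s with hu
  have hSBu : SB *ᵥ u = lam • (Wh *ᵥ s) := by
    have h1 : Wh⁻¹ *ᵥ (SB *ᵥ u) = lam • s := by
      rw [hu, mulVec_mulVec, mulVec_mulVec]
      exact heig
    have h2 := congrArg (Wh *ᵥ ·) h1
    rw [mulVec_mulVec, hWW, one_mulVec, mulVec_smul] at h2
    exact h2
  have hlam : 0 ≤ lam := by
    have h1 : s ⬝ᵥ ((Wh⁻¹ * SB * Wh⁻¹) *ᵥ s) = lam := by
      rw [heig, dotProduct_smul, smul_eq_mul, hs, mul_one]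
    have h2 : s ⬝ᵥ ((Wh⁻¹ * SB * Wh⁻¹) *ᵥ s) = u ⬝ᵥ (SB *ᵥ u) := by
      calc s ⬝ᵥ ((Wh⁻¹ * SB * Wh⁻¹) *ᵥ s)
          = s ⬝ᵥ (Wh⁻¹ *ᵥ (SB *ᵥ u)) := by
            rw [hu, mulVec_mulVec, mulVec_mulVec]
        _ = (s ᵥ* Wh⁻¹) ⬝ᵥ (SB *ᵥ u) := dotProduct_mulVec _ _ _
        _ = u ⬝ᵥ (SB *ᵥ u) := by rw [← mulVec_transpose, hWinvT]
    rw [← h1, h2]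
    exact hSBquad u
  have h1lam : (0:ℝ) < 1 + lam := by linarith
  -- candidate solves the same equation
  have hSδu : Sδ *ᵥ u = Wh *ᵥ s := by
    rw [hu, mulVec_mulVec, ← hWh, Matrix.mul_assoc, hWW, Matrix.mul_one]
  have hcand : Sδ *ᵥ ((1 / (1 + lam)) • u) + SB *ᵥ ((1 / (1 + lam)) • u) = Wh *ᵥ s := by
    rw [mulVec_smul, mulVec_smul, hSδu, hSBu, smul_smul, ← add_smul]
    have : 1 / (1 + lam) + 1 / (1 + lam) * lam = 1 := by field_simp
    rw [this, one_smul]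
  -- uniqueness via positive definiteness
  set γ : Fin p → ℝ := β - (1 / (1 + lam)) • u with hγ
  have hγeq : Sδ *ᵥ γ + SB *ᵥ γ = 0 := by
    rw [hγ, mulVec_sub, mulVec_sub]
    rw [show Sδ *ᵥ β - Sδ *ᵥ ((1 / (1 + lam)) • u) + (SB *ᵥ β - SB *ᵥ ((1 / (1 + lam)) • u))
      = (Sδ *ᵥ β + SB *ᵥ β) - (Sδ *ᵥ ((1 / (1 + lam)) • u) + SB *ᵥ ((1 / (1 + lam)) • u))
      from by abel, hmain, hcand, sub_self]
  have hγ0 : γ = 0 := by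
    by_contra hne
    have hq := hpos.dotProduct_mulVec_pos hne
    rw [star_trivial] at hq
    have hq2 : γ ⬝ᵥ (Sδ *ᵥ γ) + γ ⬝ᵥ (SB *ᵥ γ) = 0 := by
      rw [← dotProduct_add, hγeq, dotProduct_zero]
    have := hSBquad γ
    linarith
  have : β = (1 / (1 + lam)) • u := by
    have := sub_eq_zero.mp hγ0
    exact this
  rw [this, hu]
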